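/- Let W_8 ⊆ {0,1}^3 be the configuration W_8 = {(1,1,0),(1,0,1),(0,1,1)} in Q_3 (the three vertices of weight 2). Then λ(W_8,3) ≥ 2/3. -/

import Mathlib

open Filter

namespace CubeDensity

/-- The automorphism of `Q_d` given by permuting coordinates by `σ` and then
complementing the values in the coordinates where `ε` is `true`. -/
def autMap (d : ℕ) (σ : Equiv.Perm (Fin d)) (ε : Fin d → Bool) (v : Fin d → Bool) :
    Fin d → Bool :=
  fun i => xor (v (σ⁻¹ i)) (ε i)

/-- `K` is an exact copy of `H` in `Q_d`: some automorphism of `Q_d` maps `H` onto `K`. -/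
def ExactCopy (d : ℕ) (H K : Set (Fin d → Bool)) : Prop :=
  ∃ σ : Equiv.Perm (Fin d), ∃ ε : Fin d → Bool, autMap d σ ε '' H = K

/-- The vertex of `Q_n` in the sub-`d`-cube with flip coordinates `F` (and fixed values `g`
outside `F`) corresponding to the vertex `u` of `Q_d`, identifying the flip coordinates
with `Fin d` in increasing order. -/
def embed {n d : ℕ} (F : Finset (Fin n)) (hF : F.card = d) (g : Fin n → Bool)
    (u : Fin d → Bool) : Fin n → Bool :=
  fun i => if h : i ∈ F then u ((F.orderIsoOfFin hF).symm ⟨i, h⟩) else g i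

/-- The sub-`d`-cube of `Q_n` with flip coordinates `F` and fixed values `g` outside `F`
is `H`-good for `S`: the configuration induced by `S` on it is an exact copy of `H`. -/
def IsGood {n d : ℕ} (H : Set (Fin d → Bool)) (S : Set (Fin n → Bool))
    (F : Finset (Fin n)) (hF : F.card = d) (g : Fin n → Bool) : Prop :=
  ExactCopy d H {u : Fin d → Bool | embed F hF g u ∈ S}

/-- The number of `H`-good sub-`d`-cubes of `Q_n`, where a sub-`d`-cube is encoded as a
pair `(F, g)` with `F` the `d`-element set of flip coordinates and `g` the fixed values
outside `F` (normalized to be `false` on `F`). -/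
noncomputable def goodCount (d : ℕ) (H : Set (Fin d → Bool)) (n : ℕ)
    (S : Set (Fin n → Bool)) : ℕ :=
  Nat.card {p : Finset (Fin n) × (Fin n → Bool) //
    ∃ hF : p.1.card = d, (∀ i ∈ p.1, p.2 i = false) ∧ IsGood H S p.1 hF p.2}

/-- `g(H,d,n,S)`: the fraction of the `C(n,d) * 2^(n-d)` sub-`d`-cubes of `Q_n` that are
`H`-good for `S`. -/
noncomputable def gFrac (d : ℕ) (H : Set (Fin d → Bool)) (n : ℕ)
    (S : Set (Fin n → Bool)) : ℝ :=
  (goodCount d H n S : ℝ) / ((n.choose d : ℝ) * 2 ^ (n - d))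

/-- `ex(H,d,n)`: the maximum over all `S ⊆ {0,1}^n` of the fraction of `H`-good
sub-`d`-cubes. -/
noncomputable def exD (d : ℕ) (H : Set (Fin d → Bool)) (n : ℕ) : ℝ :=
  ⨆ S : Set (Fin n → Bool), gFrac d H n S

end CubeDensity

namespace CubeDensity

variable {n d : ℕ}

open Finset

variable {n d : ℕ}

/-- restriction of `S` to the sub-`n`-cube where coordinate `j` equals `b`. -/
def slice (j : Fin (n+1)) (b : Bool) (S : Set (Fin (n+1) → Bool)) : Set (Fin n → Bool) :=
  {x | Fin.insertNth (α := fun _ => Bool) j b x ∈ S}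

/-- delete coordinate `j` from a flip set not containing `j`. -/
noncomputable def fdel (j : Fin (n+1)) (F : Finset (Fin (n+1))) : Finset (Fin n) :=
  F.preimage j.succAbove (Fin.succAbove_right_injective.injOn)

lemma mem_fdel {j : Fin (n+1)} {F : Finset (Fin (n+1))} {k : Fin n} :
    k ∈ fdel j F ↔ j.succAbove k ∈ F := Finset.mem_preimage

lemma fdel_map {j : Fin (n+1)} {F : Finset (Fin (n+1))} (hj : j ∉ F) :
    (fdel j F).map ⟨j.succAbove, Fin.succAbove_right_injective⟩ = F := by
  ext i
  simp only [Finset.mem_map, Function.Embedding.coeFn_mk, mem_fdel]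
  constructor
  · rintro ⟨k, hk, rfl⟩; exact hk
  · intro hi
    have hij : i ≠ j := fun h => hj (h ▸ hi)
    obtain ⟨k, rfl⟩ := Fin.exists_succAbove_eq hij
    exact ⟨k, hi, rfl⟩

lemma fdel_card {j : Fin (n+1)} {F : Finset (Fin (n+1))} (hj : j ∉ F) :
    (fdel j F).card = F.card := by
  conv_rhs => rw [← fdel_map hj]
  rw [card_map]

lemma emb_compat {j : Fin (n+1)} {F : Finset (Fin (n+1))} (hj : j ∉ F)
    (hF : F.card = d) (hF' : (fdel j F).card = d) (a : Fin d) :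
    j.succAbove ((fdel j F).orderEmbOfFin hF' a) = F.orderEmbOfFin hF a := by
  have h := Finset.orderEmbOfFin_unique hF
      (f := fun a => j.succAbove ((fdel j F).orderEmbOfFin hF' a))
      (fun x => mem_fdel.mp (Finset.orderEmbOfFin_mem _ hF' x))
      ((Fin.strictMono_succAbove j).comp ((fdel j F).orderEmbOfFin hF').strictMono)
  exact congrFun h a

lemma embed_insertNth {F : Finset (Fin (n+1))} (hF : F.card = d) {j : Fin (n+1)}
    (hj : j ∉ F) (hF' : (fdel j F).card = d) (g : Fin (n+1) → Bool) (u : Fin d → Bool) :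
    embed F hF g u =
      Fin.insertNth (α := fun _ => Bool) j (g j)
        (embed (fdel j F) hF' (fun k => g (j.succAbove k)) u) := by
  funext i
  rcases eq_or_ne i j with rfl | hij
  · rw [Fin.insertNth_apply_same (α := fun _ => Bool)]
    exact dif_neg hj
  · obtain ⟨k, rfl⟩ := Fin.exists_succAbove_eq hij
    rw [Fin.insertNth_apply_succAbove (α := fun _ => Bool)]
    show embed F hF g u _ = embed (fdel j F) hF' _ u k
    unfold embed
    by_cases hk : k ∈ fdel j F
    · rw [dif_pos (mem_fdel.mp hk), dif_pos hk]
      congr 1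
      set a := ((fdel j F).orderIsoOfFin hF').symm ⟨k, hk⟩ with ha
      have h1 : (fdel j F).orderEmbOfFin hF' a = k := by
        have := ((fdel j F).orderIsoOfFin hF').apply_symm_apply ⟨k, hk⟩
        rw [← ha] at this
        exact congrArg Subtype.val this
      have h2 : F.orderEmbOfFin hF a = j.succAbove k := by
        rw [← emb_compat hj hF hF', h1]
      have : ((F.orderIsoOfFin hF)) a = ⟨j.succAbove k, mem_fdel.mp hk⟩ := Subtype.ext h2
      rw [← this]; exact OrderIso.symm_apply_apply _ a
    · rw [dif_neg (fun h => hk (mem_fdel.mpr h)), dif_neg hk]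

lemma isGood_slice_iff (H : Set (Fin d → Bool)) (S : Set (Fin (n+1) → Bool))
    {F : Finset (Fin (n+1))} (hF : F.card = d) {j : Fin (n+1)} (hj : j ∉ F)
    (hF' : (fdel j F).card = d) (g : Fin (n+1) → Bool) :
    IsGood H S F hF g ↔
      IsGood H (slice j (g j) S) (fdel j F) hF' (fun k => g (j.succAbove k)) := by
  unfold IsGood
  have : {u : Fin d → Bool | embed F hF g u ∈ S} =
      {u | embed (fdel j F) hF' (fun k => g (j.succAbove k)) u ∈ slice j (g j) S} := by
    ext u
    simp only [Set.mem_setOf_eq, slice, embed_insertNth hF hj hF' g u]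
  rw [this]


open Classical in
/-- the good sub-cubes as a `Finset`. -/
noncomputable def G (d : ℕ) (H : Set (Fin d → Bool)) (n : ℕ) (S : Set (Fin n → Bool)) :
    Finset (Finset (Fin n) × (Fin n → Bool)) :=
  Finset.univ.filter (fun p =>
    ∃ hF : p.1.card = d, (∀ i ∈ p.1, p.2 i = false) ∧ IsGood H S p.1 hF p.2)

lemma goodCount_eq_card (d : ℕ) (H : Set (Fin d → Bool)) (n : ℕ) (S : Set (Fin n → Bool)) :
    goodCount d H n S = (G d H n S).card := by
  classical
  rw [goodCount, G, Nat.card_eq_fintype_card]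
  convert Fintype.card_subtype _

lemma count_slices (H : Set (Fin d → Bool)) (S : Set (Fin (n+1) → Bool)) :
    (n + 1 - d) * (G d H (n+1) S).card
      = ∑ jb : Fin (n+1) × Bool, (G d H n (slice jb.1 jb.2 S)).card := by
  classical
  have hR : ∑ jb : Fin (n+1) × Bool, (G d H n (slice jb.1 jb.2 S)).card
      = ((univ : Finset (Fin (n+1) × Bool)).sigma
          (fun jb => G d H n (slice jb.1 jb.2 S))).card := by
    rw [Finset.card_sigma]
  have hL : ((G d H (n+1) S).sigma (fun p => (p.1)ᶜ)).card
      = (n + 1 - d) * (G d H (n+1) S).card := by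
    rw [Finset.card_sigma]
    have hc : ∀ p ∈ G d H (n+1) S, ((p.1)ᶜ).card = n + 1 - d := by
      intro p hp
      obtain ⟨hF, -, -⟩ := (Finset.mem_filter.mp hp).2
      rw [Finset.card_compl, hF, Fintype.card_fin]
    rw [Finset.sum_congr rfl hc, Finset.sum_const, smul_eq_mul, mul_comm]
  rw [hR, ← hL]
  apply Finset.card_bij
    (i := fun (a : (_ : Finset (Fin (n+1)) × (Fin (n+1) → Bool)) × Fin (n+1)) _ =>
      (⟨(a.2, a.1.2 a.2), (fdel a.2 a.1.1, fun k => a.1.2 (a.2.succAbove k))⟩ :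
        (_ : Fin (n+1) × Bool) × (Finset (Fin n) × (Fin n → Bool))))
  · -- maps into target
    rintro ⟨⟨F, g⟩, j⟩ ha
    rw [Finset.mem_sigma] at ha
    obtain ⟨hp, hj⟩ := ha
    have hjF : j ∉ F := Finset.mem_compl.mp hj
    obtain ⟨hF, hnorm, hgood⟩ := (Finset.mem_filter.mp hp).2
    rw [Finset.mem_sigma]
    refine ⟨Finset.mem_univ _, Finset.mem_filter.mpr ⟨Finset.mem_univ _, ?_⟩⟩
    have hF' : (fdel j F).card = d := by rw [fdel_card hjF, hF]
    refine ⟨hF', fun k hk => hnorm _ (mem_fdel.mp hk), ?_⟩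
    exact (isGood_slice_iff H S hF hjF hF' g).mp hgood
  · -- injective
    rintro ⟨⟨F1, g1⟩, j1⟩ ha1 ⟨⟨F2, g2⟩, j2⟩ ha2 h
    rw [Finset.mem_sigma] at ha1 ha2
    have hj1 : j1 ∉ F1 := Finset.mem_compl.mp ha1.2
    have hj2 : j2 ∉ F2 := Finset.mem_compl.mp ha2.2
    injection h with h1 h2
    have hj : j1 = j2 := congrArg Prod.fst h1
    subst hj
    have hgj : g1 j1 = g2 j1 := congrArg Prod.snd h1
    have hfd : fdel j1 F1 = fdel j1 F2 := congrArg Prod.fst h2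
    have hgs : (fun k => g1 (j1.succAbove k)) = fun k => g2 (j1.succAbove k) :=
      congrArg Prod.snd h2
    have hF : F1 = F2 := by
      rw [← fdel_map (F := F1) hj1, ← fdel_map (F := F2) hj2, hfd]
    have hg : g1 = g2 := by
      funext i
      rcases eq_or_ne i j1 with rfl | hij
      · exact hgj
      · obtain ⟨k, rfl⟩ := Fin.exists_succAbove_eq hij
        exact congrFun hgs k
    subst hF; subst hg; rfl
  · -- surjective
    rintro ⟨⟨j, b⟩, ⟨F', g'⟩⟩ hb
    rw [Finset.mem_sigma] at hb
    obtain ⟨hF', hnorm', hgood'⟩ := (Finset.mem_filter.mp hb.2).2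
    set F : Finset (Fin (n+1)) := F'.map ⟨j.succAbove, Fin.succAbove_right_injective⟩ with hFdef
    set g : Fin (n+1) → Bool := Fin.insertNth (α := fun _ => Bool) j b g' with hgdef
    have hjF : j ∉ F := by
      rw [hFdef]
      simp only [Finset.mem_map, Function.Embedding.coeFn_mk, not_exists]
      rintro k ⟨-, hk⟩
      exact Fin.succAbove_ne j k hk
    have hgj : g j = b := Fin.insertNth_apply_same (α := fun _ => Bool) j b g'
    have hfd : fdel j F = F' := by
      ext k
      rw [mem_fdel, hFdef]
      simp only [Finset.mem_map, Function.Embedding.coeFn_mk]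
      constructor
      · rintro ⟨k', hk', he⟩
        rwa [← Fin.succAbove_right_injective.eq_iff.mp he]
      · intro hk; exact ⟨k, hk, rfl⟩
    have hgs : (fun k => g (j.succAbove k)) = g' := by
      funext k
      exact Fin.insertNth_apply_succAbove (α := fun _ => Bool) j b g' k
    have hF : F.card = d := by rw [hFdef, Finset.card_map, hF']
    refine ⟨⟨(F, g), j⟩, ?_, ?_⟩
    · rw [Finset.mem_sigma]
      refine ⟨Finset.mem_filter.mpr ⟨Finset.mem_univ _, ?_⟩, Finset.mem_compl.mpr hjF⟩
      refine ⟨hF, ?_, ?_⟩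
      · rintro i hi
        rw [hFdef] at hi
        simp only [Finset.mem_map, Function.Embedding.coeFn_mk] at hi
        obtain ⟨k, hk, rfl⟩ := hi
        show g (j.succAbove k) = false
        rw [congrFun hgs k]
        exact hnorm' k hk
      · have hFd : (fdel j F).card = d := by rw [fdel_card hjF, hF]
        refine (isGood_slice_iff H S hF hjF hFd g).mpr ?_
        rw [hgj]
        revert hFd
        rw [hfd, hgs]
        intro hFd
        exact hgood'
    · show (⟨(j, g j), (fdel j F, fun k => g (j.succAbove k))⟩ :
          (_ : Fin (n+1) × Bool) × (Finset (Fin n) × (Fin n → Bool))) = _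
      rw [hgj, hfd, hgs]

lemma gFrac_nonneg {H : Set (Fin d → Bool)} {S : Set (Fin n → Bool)} :
    0 ≤ gFrac d H n S :=
  div_nonneg (Nat.cast_nonneg _) (by positivity)

lemma bddAbove_gFrac (d : ℕ) (H : Set (Fin d → Bool)) (n : ℕ) :
    BddAbove (Set.range (gFrac d H n)) := by
  classical
  refine ⟨(Fintype.card (Finset (Fin n) × (Fin n → Bool)) : ℝ) /
    ((n.choose d : ℝ) * 2 ^ (n - d)), ?_⟩
  rintro x ⟨S, rfl⟩
  unfold gFrac
  rcases eq_or_lt_of_le (show (0:ℝ) ≤ (n.choose d : ℝ) * 2 ^ (n-d) by positivity) with h | h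
  · rw [← h, div_zero, div_zero]
  · apply (div_le_div_iff_of_pos_right h).mpr
    have : goodCount d H n S ≤ Fintype.card (Finset (Fin n) × (Fin n → Bool)) := by
      rw [goodCount, ← Nat.card_eq_fintype_card]
      exact Nat.card_le_card_of_injective Subtype.val Subtype.val_injective
    exact_mod_cast this

lemma gFrac_le_exD {H : Set (Fin d → Bool)} (S : Set (Fin n → Bool)) :
    gFrac d H n S ≤ exD d H n :=
  le_ciSup (bddAbove_gFrac d H n) S

lemma exD_nonneg {H : Set (Fin d → Bool)} : 0 ≤ exD d H n :=
  le_trans gFrac_nonneg (gFrac_le_exD ∅)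

lemma exD_succ_le (H : Set (Fin d → Bool)) (hd : d ≤ n) :
    exD d H (n+1) ≤ exD d H n := by
  classical
  apply ciSup_le
  intro S
  set E := exD d H n with hE
  have hD1 : (0:ℝ) < ((n+1).choose d : ℝ) * 2 ^ (n+1-d) := by
    have h := Nat.choose_pos (le_trans hd (Nat.le_succ n))
    positivity
  rw [gFrac, div_le_iff₀ hD1]
  have hmul : (0:ℝ) < ((n+1-d : ℕ) : ℝ) := by
    have h1 : 1 ≤ n+1-d := by omega
    exact_mod_cast h1
  rw [← mul_le_mul_iff_of_pos_left hmul]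
  have key := count_slices (n := n) (d := d) H S
  have hterm : ∀ jb : Fin (n+1) × Bool,
      ((G d H n (slice jb.1 jb.2 S)).card : ℝ) ≤ E * ((n.choose d : ℝ) * 2 ^ (n-d)) := by
    intro jb
    have hc := Nat.choose_pos hd
    have hpos : (0:ℝ) < (n.choose d : ℝ) * 2 ^ (n-d) := by positivity
    have h := gFrac_le_exD (d := d) (H := H) (slice jb.1 jb.2 S)
    rw [gFrac, div_le_iff₀ hpos, goodCount_eq_card] at h
    exact h
  have h1nat : (n+1-d) * ((n+1).choose d) = (n+1) * n.choose d := by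
    rw [mul_comm, ← Nat.choose_succ_right_eq, ← Nat.add_one_mul_choose_eq]
  have h1R : ((n+1-d : ℕ):ℝ) * (((n+1).choose d : ℕ) : ℝ) = ((n+1:ℕ):ℝ) * ((n.choose d : ℕ):ℝ) := by
    exact_mod_cast h1nat
  have h2R : (2:ℝ)^(n+1-d) = 2^(n-d) * 2 := by
    rw [show n+1-d = (n-d)+1 from by omega, pow_succ]
  calc ((n+1-d : ℕ):ℝ) * (goodCount d H (n+1) S : ℝ)
      = (((n+1-d) * (G d H (n+1) S).card : ℕ) : ℝ) := by
        rw [goodCount_eq_card]; push_cast; ring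
    _ = ((∑ jb : Fin (n+1) × Bool, (G d H n (slice jb.1 jb.2 S)).card : ℕ) : ℝ) := by
        rw [key]
    _ ≤ ∑ _jb : Fin (n+1) × Bool, (E * ((n.choose d : ℝ) * 2 ^ (n-d))) := by
        push_cast
        exact Finset.sum_le_sum (fun jb _ => hterm jb)
    _ = (2*(n+1)) * (E * ((n.choose d:ℝ) * 2^(n-d))) := by
        rw [Finset.sum_const]
        simp only [Finset.card_univ, Fintype.card_prod, Fintype.card_fin, Fintype.card_bool,
          nsmul_eq_mul]
        push_cast; ring
    _ = ((n+1-d : ℕ):ℝ) * (E * (((n+1).choose d : ℝ) * 2 ^ (n+1-d))) := by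
        rw [h2R, show ((n+1-d : ℕ):ℝ) * (E * (((n+1).choose d : ℝ) * (2^(n-d) * 2)))
            = E * ((((n+1-d : ℕ):ℝ) * (((n+1).choose d : ℕ):ℝ)) * (2^(n-d) * 2)) from by ring,
          h1R]
        push_cast; ring

section Cnt
variable {α : Type*} [DecidableEq α]

/-- number of subsets of `s` with cardinality `≡ r [MOD 3]`. -/
def cnt (s : Finset α) (r : ℕ) : ℕ :=
  (s.powerset.filter fun T => T.card % 3 = r).card

lemma cnt_insert {a : α} {s : Finset α} (ha : a ∉ s) (r : ℕ) (hr : r < 3) :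
    cnt (insert a s) r = cnt s r + cnt s ((r+2) % 3) := by
  unfold cnt
  rw [Finset.powerset_insert, Finset.filter_union]
  rw [Finset.card_union_of_disjoint]
  · congr 1
    rw [Finset.filter_image]
    · rw [Finset.card_image_of_injOn]
      · congr 1
        apply Finset.filter_congr
        intro T hT
        rw [Finset.mem_powerset] at hT
        have haT : a ∉ T := fun h => ha (hT h)
        rw [Finset.card_insert_of_notMem haT]
        constructor <;> intro h <;> omega
      · intro T hT U hU hTU
        rw [Finset.mem_coe, Finset.mem_filter, Finset.mem_powerset] at hT hU
        have haT : a ∉ T := fun h => ha (hT.1 h)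
        have haU : a ∉ U := fun h => ha (hU.1 h)
        rw [← Finset.erase_insert haT, ← Finset.erase_insert haU, hTU]
  · apply Finset.disjoint_filter_filter
    apply Finset.disjoint_left.mpr
    intro T hT hT2
    rw [Finset.mem_powerset] at hT
    rw [Finset.mem_image] at hT2
    obtain ⟨U, hU, rfl⟩ := hT2
    exact ha (hT (Finset.mem_insert_self a U))

lemma cnt_balanced (s : Finset α) : ∀ r r', r < 3 → r' < 3 → cnt s r ≤ cnt s r' + 1 := by
  classical
  induction s using Finset.induction_on with
  | empty =>
    intro r r' hr hr'
    unfold cnt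
    simp only [Finset.powerset_empty, Finset.filter_singleton, Finset.card_empty]
    interval_cases r <;> interval_cases r' <;> simp
  | @insert a s ha ih =>
    intro r r' hr hr'
    rw [cnt_insert ha r hr, cnt_insert ha r' hr']
    have h01 := ih 0 1 (by omega) (by omega)
    have h02 := ih 0 2 (by omega) (by omega)
    have h10 := ih 1 0 (by omega) (by omega)
    have h12 := ih 1 2 (by omega) (by omega)
    have h20 := ih 2 0 (by omega) (by omega)
    have h21 := ih 2 1 (by omega) (by omega)
    interval_cases r <;> interval_cases r' <;> simp <;> omega

lemma cnt_total (s : Finset α) : cnt s 0 + cnt s 1 + cnt s 2 = 2 ^ s.card := by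
  classical
  have h := Finset.card_eq_sum_card_fiberwise
    (f := fun T : Finset α => T.card % 3) (s := s.powerset) (t := Finset.range 3)
    (fun T _ => Finset.mem_range.mpr (Nat.mod_lt _ (by omega)))
  rw [Finset.card_powerset] at h
  rw [Finset.sum_range_succ, Finset.sum_range_succ, Finset.sum_range_one] at h
  beta_reduce at h
  unfold cnt
  omega

lemma cnt_zero_le (s : Finset α) : 3 * cnt s 0 ≤ 2 ^ s.card + 2 := by
  have h1 := cnt_balanced s 0 1 (by omega) (by omega)
  have h2 := cnt_balanced s 0 2 (by omega) (by omega)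
  have h3 := cnt_total s
  omega

end Cnt

/-- weight of a 0/1 vector. -/
def wt {m : ℕ} (x : Fin m → Bool) : ℕ := (Finset.univ.filter fun i => x i = true).card

lemma embed_apply_iso {F : Finset (Fin n)} (hF : F.card = d) (g : Fin n → Bool)
    (u : Fin d → Bool) (a : Fin d) :
    embed F hF g u ((F.orderIsoOfFin hF a : Fin n)) = u a := by
  unfold embed
  rw [dif_pos (F.orderIsoOfFin hF a).2]
  congr 1
  rw [show (⟨((F.orderIsoOfFin hF a) : Fin n), (F.orderIsoOfFin hF a).2⟩ : {x // x ∈ F})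
      = F.orderIsoOfFin hF a from Subtype.ext rfl]
  exact OrderIso.symm_apply_apply _ a

lemma wt_embed {F : Finset (Fin n)} (hF : F.card = d) {g : Fin n → Bool}
    (hg : ∀ i ∈ F, g i = false) (u : Fin d → Bool) :
    wt (embed F hF g u) = wt u + wt g := by
  classical
  have h1 : ∑ i ∈ F, (if embed F hF g u i = true then 1 else 0) = wt u := by
    rw [← Finset.sum_coe_sort]
    rw [← Equiv.sum_comp (F.orderIsoOfFin hF).toEquiv
      (fun x : F => if embed F hF g u x = true then 1 else 0)]
    unfold wt
    rw [Finset.card_filter]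
    apply Finset.sum_congr rfl
    intro a _
    rw [show ((F.orderIsoOfFin hF).toEquiv a : Fin n) = (F.orderIsoOfFin hF a : Fin n) from rfl]
    rw [embed_apply_iso hF g u a]
  have h2 : ∑ i ∈ Fᶜ, (if embed F hF g u i = true then 1 else 0) = wt g := by
    unfold wt
    rw [Finset.card_filter, ← Finset.sum_add_sum_compl F]
    have hz : ∑ i ∈ F, (if g i = true then 1 else 0) = 0 :=
      Finset.sum_eq_zero (fun i hi => by rw [hg i hi]; simp)
    rw [hz, zero_add]
    apply Finset.sum_congr rfl
    intro i hi
    have hiF : i ∉ F := Finset.mem_compl.mp hi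
    unfold embed
    rw [dif_neg hiF]
  unfold wt
  rw [Finset.card_filter, ← Finset.sum_add_sum_compl F, h1, h2]
  rfl

/-- the configuration W₈. -/
def W8 : Set (Fin 3 → Bool) :=
  {![true, true, false], ![true, false, true], ![false, true, true]}

lemma copy_two : ExactCopy 3 W8 {u : Fin 3 → Bool | wt u % 3 = 2} := by
  refine ⟨1, fun _ => false, ?_⟩
  ext u
  simp only [autMap, inv_one, Equiv.Perm.coe_one, id_eq, Bool.xor_false, Set.mem_image,
    W8, Set.mem_insert_iff, Set.mem_singleton_iff, Set.mem_setOf_eq]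
  revert u
  decide

lemma copy_one : ExactCopy 3 W8 {u : Fin 3 → Bool | wt u % 3 = 1} := by
  refine ⟨1, fun _ => true, ?_⟩
  ext u
  simp only [autMap, inv_one, Equiv.Perm.coe_one, id_eq, Bool.xor_true, Set.mem_image,
    W8, Set.mem_insert_iff, Set.mem_singleton_iff, Set.mem_setOf_eq]
  revert u
  decide

lemma isGood_construction {F : Finset (Fin n)} (hF : F.card = 3) {g : Fin n → Bool}
    (hg : ∀ i ∈ F, g i = false) (hw : wt g % 3 ≠ 0) :
    IsGood W8 {x : Fin n → Bool | wt x % 3 = 0} F hF g := by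
  unfold IsGood
  have hset : {u : Fin 3 → Bool | embed F hF g u ∈ {x : Fin n → Bool | wt x % 3 = 0}}
      = {u : Fin 3 → Bool | (wt u + wt g) % 3 = 0} := by
    ext u
    simp only [Set.mem_setOf_eq, wt_embed hF hg]
  rw [hset]
  rcases (show wt g % 3 = 1 ∨ wt g % 3 = 2 by omega) with h | h
  · have he : {u : Fin 3 → Bool | (wt u + wt g) % 3 = 0} = {u | wt u % 3 = 2} := by
      ext u; simp only [Set.mem_setOf_eq]; omega
    rw [he]; exact copy_two
  · have he : {u : Fin 3 → Bool | (wt u + wt g) % 3 = 0} = {u | wt u % 3 = 1} := by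
      ext u; simp only [Set.mem_setOf_eq]; omega
    rw [he]; exact copy_one

lemma goodCount_lower (n : ℕ) (hn : 3 ≤ n) :
    n.choose 3 * (2 * 2 ^ (n-3)) ≤
      3 * goodCount 3 W8 n {x : Fin n → Bool | wt x % 3 = 0} + 2 * n.choose 3 := by
  classical
  set S : Set (Fin n → Bool) := {x : Fin n → Bool | wt x % 3 = 0} with hS
  rw [goodCount_eq_card]
  set Q : Finset (Finset (Fin n) × (Fin n → Bool)) := Finset.univ.filter
    (fun p => p.1.card = 3 ∧ (∀ i ∈ p.1, p.2 i = false) ∧ wt p.2 % 3 ≠ 0) with hQ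
  have hsub : Q ⊆ G 3 W8 n S := by
    intro p hp
    rw [hQ, Finset.mem_filter] at hp
    obtain ⟨-, h1, h2, h3⟩ := hp
    exact Finset.mem_filter.mpr ⟨Finset.mem_univ _, h1, h2, isGood_construction h1 h2 h3⟩
  have hQcard : ((Finset.univ.powersetCard 3 : Finset (Finset (Fin n))).sigma
      (fun F => ((Fᶜ).powerset.filter fun T => ¬ (T.card % 3 = 0)))).card = Q.card := by
    apply Finset.card_bij (i := fun (a : (_ : Finset (Fin n)) × Finset (Fin n)) _ =>
      (a.1, fun i => if i ∈ a.2 then true else false))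
    · rintro ⟨F, T⟩ ha
      rw [Finset.mem_sigma] at ha
      obtain ⟨hFm, hTm⟩ := ha
      rw [Finset.mem_filter, Finset.mem_powerset] at hTm
      obtain ⟨hTsub, hT3⟩ := hTm
      rw [hQ, Finset.mem_filter]
      refine ⟨Finset.mem_univ _, Finset.mem_powersetCard_univ.mp hFm, ?_, ?_⟩
      · intro i hi
        have : i ∉ T := fun h => (Finset.mem_compl.mp (hTsub h)) hi
        simp [this]
      · have : wt (fun i => if i ∈ T then true else false) = T.card := by
          unfold wt
          congr 1
          ext i
          simp
        rw [this]
        exact hT3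
    · rintro ⟨F1, T1⟩ h1 ⟨F2, T2⟩ h2 h
      have hF : F1 = F2 := congrArg Prod.fst h
      have hfun := congrArg Prod.snd h
      have hT : T1 = T2 := by
        ext i
        have := congrFun hfun i
        by_cases h1 : i ∈ T1 <;> by_cases h2 : i ∈ T2 <;> simp_all
      subst hF; subst hT; rfl
    · rintro ⟨F, g⟩ hb
      rw [hQ, Finset.mem_filter] at hb
      obtain ⟨-, h1, h2, h3⟩ := hb
      refine ⟨⟨F, Finset.univ.filter (fun i => g i = true)⟩, ?_, ?_⟩
      · rw [Finset.mem_sigma]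
        refine ⟨Finset.mem_powersetCard_univ.mpr h1, ?_⟩
        rw [Finset.mem_filter, Finset.mem_powerset]
        constructor
        · intro i hi
          rw [Finset.mem_filter] at hi
          refine Finset.mem_compl.mpr (fun hiF => ?_)
          have hiF' : i ∈ F := hiF
          have hgi : g i = false := h2 i hiF'
          rw [hgi] at hi
          simp at hi
        · exact h3
      · show (F, fun i => if i ∈ Finset.univ.filter (fun i => g i = true) then true else false)
          = (F, g)
        refine Prod.ext rfl ?_
        funext i
        rcases Bool.eq_false_or_eq_true (g i) with hgi | hgi <;> simp [hgi]
  -- per-fiber lower bound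
  have hfiber : ∀ F : Finset (Fin n), F ∈ (Finset.univ.powersetCard 3 : Finset (Finset (Fin n))) →
      2 * 2 ^ (n-3) ≤ 3 * ((Fᶜ).powerset.filter fun T => ¬ (T.card % 3 = 0)).card + 2 := by
    intro F hF
    have hFc : (Fᶜ).card = n - 3 := by
      rw [Finset.card_compl, Finset.mem_powersetCard_univ.mp hF, Fintype.card_fin]
    have ht := Finset.card_filter_add_card_filter_not
      (s := (Fᶜ).powerset) (p := fun T => T.card % 3 = 0)
    rw [Finset.card_powerset, hFc] at ht
    have hz := cnt_zero_le (Fᶜ)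
    rw [hFc] at hz
    unfold cnt at hz
    omega
  have hsum : (Finset.univ.powersetCard 3 : Finset (Finset (Fin n))).card * (2 * 2 ^ (n-3)) ≤
      3 * ((Finset.univ.powersetCard 3 : Finset (Finset (Fin n))).sigma
        (fun F => ((Fᶜ).powerset.filter fun T => ¬ (T.card % 3 = 0)))).card +
      2 * (Finset.univ.powersetCard 3 : Finset (Finset (Fin n))).card := by
    calc (Finset.univ.powersetCard 3 : Finset (Finset (Fin n))).card * (2 * 2 ^ (n-3))
        = ∑ _F ∈ (Finset.univ.powersetCard 3 : Finset (Finset (Fin n))), (2 * 2 ^ (n-3)) := by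
          rw [Finset.sum_const, smul_eq_mul]
      _ ≤ ∑ F ∈ (Finset.univ.powersetCard 3 : Finset (Finset (Fin n))),
            (3 * ((Fᶜ).powerset.filter fun T => ¬ (T.card % 3 = 0)).card + 2) :=
          Finset.sum_le_sum hfiber
      _ = 3 * ((Finset.univ.powersetCard 3 : Finset (Finset (Fin n))).sigma
            (fun F => ((Fᶜ).powerset.filter fun T => ¬ (T.card % 3 = 0)))).card +
          2 * (Finset.univ.powersetCard 3 : Finset (Finset (Fin n))).card := by
          rw [Finset.sum_add_distrib, ← Finset.mul_sum, Finset.sum_const, smul_eq_mul,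
            Finset.card_sigma, mul_comm _ 2]
  have hpc : (Finset.univ.powersetCard 3 : Finset (Finset (Fin n))).card = n.choose 3 := by
    rw [Finset.card_powersetCard, Finset.card_univ, Fintype.card_fin]
  have hQG : Q.card ≤ (G 3 W8 n S).card := Finset.card_le_card hsub
  rw [hpc] at hsum
  omega

lemma exD_lower (n : ℕ) (hn : 3 ≤ n) :
    2/3 - (2/3) * ((1:ℝ)/2) ^ (n-3) ≤ exD 3 W8 n := by
  classical
  refine le_trans ?_ (gFrac_le_exD {x : Fin n → Bool | wt x % 3 = 0})
  have hc : 0 < n.choose 3 := Nat.choose_pos hn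
  rw [gFrac, le_div_iff₀ (by positivity)]
  have key := goodCount_lower n hn
  have keyR : (n.choose 3 : ℝ) * (2 * 2 ^ (n-3)) ≤
      3 * (goodCount 3 W8 n {x : Fin n → Bool | wt x % 3 = 0} : ℝ) + 2 * (n.choose 3 : ℝ) := by
    exact_mod_cast key
  have hpow : ((1:ℝ)/2) ^ (n-3) * 2 ^ (n-3) = 1 := by
    rw [div_pow, one_pow, div_mul_cancel₀]
    positivity
  have h3 : ((1:ℝ)/2) ^ (n-3) * ((n.choose 3 : ℝ) * 2 ^ (n-3)) = (n.choose 3 : ℝ) := by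
    rw [mul_comm ((n.choose 3 : ℝ)) ((2:ℝ) ^ (n-3)), ← mul_assoc, hpow, one_mul]
  rw [sub_mul, mul_assoc, h3]
  linarith [keyR]

theorem main_result :
    ∃ L : ℝ,
      Filter.Tendsto
        (fun n => exD 3
          ({![true, true, false], ![true, false, true],
            ![false, true, true]} : Set (Fin 3 → Bool)) n)
        Filter.atTop (nhds L) ∧ 2 / 3 ≤ L := by
  classical
  show ∃ L : ℝ, Filter.Tendsto (fun n => exD 3 W8 n) Filter.atTop (nhds L) ∧ 2/3 ≤ L
  set f : ℕ → ℝ := fun n => exD 3 W8 n with hf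
  have hanti : Antitone (fun m => f (m + 3)) := by
    apply antitone_nat_of_succ_le
    intro m
    have h := exD_succ_le (n := m + 3) W8 (by omega)
    simpa [hf, show m + 1 + 3 = m + 3 + 1 from by omega] using h
  have hbdd : BddBelow (Set.range fun m => f (m + 3)) := by
    refine ⟨0, ?_⟩
    rintro x ⟨m, rfl⟩
    exact exD_nonneg
  have hlim : Tendsto (fun m => f (m + 3)) atTop (nhds (⨅ m, f (m + 3))) :=
    tendsto_atTop_ciInf hanti hbdd
  refine ⟨⨅ m, f (m + 3), ?_, ?_⟩
  · exact (Filter.tendsto_add_atTop_iff_nat 3).mp hlim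
  · have ha : Tendsto (fun m : ℕ => 2/3 - (2/3) * ((1:ℝ)/2) ^ m) atTop (nhds (2/3)) := by
      have h0 : Tendsto (fun m : ℕ => ((1:ℝ)/2) ^ m) atTop (nhds 0) :=
        tendsto_pow_atTop_nhds_zero_of_lt_one (by norm_num) (by norm_num)
      have := (tendsto_const_nhds (x := (2/3 : ℝ)) (f := atTop)).sub (h0.const_mul (2/3 : ℝ))
      simpa using this
    refine le_of_tendsto_of_tendsto' ha hlim (fun m => ?_)
    have h := exD_lower (m + 3) (by omega)
    simpa [hf, show m + 3 - 3 = m from by omega] using h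

end CubeDensity

/-- λ(W₈, 3) ≥ 2/3, where W₈ = {(1,1,0),(1,0,1),(0,1,1)} consists of the three vertices
of weight 2 in Q₃. -/
theorem dCubeDensity_W8_ge :
    ∃ L : ℝ,
      Filter.Tendsto
        (fun n => CubeDensity.exD 3
          ({![true, true, false], ![true, false, true],
            ![false, true, true]} : Set (Fin 3 → Bool)) n)
        Filter.atTop (nhds L) ∧ 2 / 3 ≤ L :=
  CubeDensity.main_result
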